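/- arXiv:1405.1516 — 2 statements merged into one kernel-verified Lean document; each statement's English description precedes it below -/
import Mathlib

section
/- Let A ∈ ℂ^{n×n} be diagonalizable, A = X D X^{-1} with D diagonal, and let A' = A + H. Then every eigenvalue λ' of A' lies within distance κ₂(X)·‖H‖₂ of some eigenvalue λ of A, where κ₂(X) = ‖X‖₂‖X^{-1}‖₂ (the Bauer–Fike theorem). -/
open scoped Matrix.Norms.L2Operator

set_option maxHeartbeats 1000000

/-- Spectral norm (operator 2-norm) of a square complex matrix. -/
noncomputable def specNorm {k : ℕ} (X : Matrix (Fin k) (Fin k) ℂ) : ℝ :=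
  ‖LinearMap.toContinuousLinearMap (Matrix.toEuclideanLin X)‖

lemma specNorm_eq_l2 {k : ℕ} (X : Matrix (Fin k) (Fin k) ℂ) : specNorm X = ‖X‖ := rfl

lemma specNorm_nonneg {k : ℕ} (X : Matrix (Fin k) (Fin k) ℂ) : 0 ≤ specNorm X :=
  norm_nonneg _

lemma l2_opNorm_diagonal_le {k : ℕ} (v : Fin k → ℂ) (b : ℝ) (hb : 0 ≤ b)
    (h : ∀ i, ‖v i‖ ≤ b) : ‖Matrix.diagonal v‖ ≤ b := by
  rw [Matrix.l2_opNorm_def]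
  refine ContinuousLinearMap.opNorm_le_bound _ hb fun x => ?_
  have hx : ∀ i, ((Matrix.toEuclideanLin ≪≫ₗ LinearMap.toContinuousLinearMap)
      (Matrix.diagonal v)) x i = v i * x i := fun i =>
    Matrix.mulVec_diagonal v (WithLp.equiv 2 _ x) i
  rw [EuclideanSpace.norm_eq, EuclideanSpace.norm_eq]
  rw [← Real.sqrt_mul_self hb, ← Real.sqrt_mul (mul_self_nonneg b)]
  apply Real.sqrt_le_sqrt
  rw [Finset.mul_sum]
  apply Finset.sum_le_sum
  intro i _
  rw [hx i, norm_mul, mul_pow]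
  have h1 : ‖v i‖ ≤ b := h i
  have h2 : ‖v i‖ ^ 2 ≤ b * b := by nlinarith [norm_nonneg (v i)]
  exact mul_le_mul_of_nonneg_right h2 (sq_nonneg _)

/-- Bauer–Fike: If `A = X D X⁻¹` with `D = diagonal d` and
`A' = A + H`, then every eigenvalue `λ'` of `A'` lies within `κ₂(X)‖H‖₂` of some
eigenvalue `d i` of `A`. -/
theorem bauer_fike (n : ℕ)
    (A H X : Matrix (Fin n) (Fin n) ℂ) (d : Fin n → ℂ)
    (hX : IsUnit X) (hA : A = X * Matrix.diagonal d * X⁻¹)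
    (lam' : ℂ) (hlam' : lam' ∈ spectrum ℂ (A + H)) :
    ∃ i : Fin n, ‖lam' - d i‖ ≤ specNorm X * specNorm X⁻¹ * specNorm H := by
  classical
  rcases Nat.eq_zero_or_pos n with hn | hn
  · subst hn
    haveI : Subsingleton (Matrix (Fin 0) (Fin 0) ℂ) :=
      ⟨fun a b => by ext i; exact i.elim0⟩
    rw [spectrum.mem_iff] at hlam'
    exact (hlam' (isUnit_of_subsingleton _)).elim
  haveI : Nonempty (Fin n) := ⟨⟨0, hn⟩⟩
  by_cases hd : ∃ i, lam' = d i
  · obtain ⟨i, hi⟩ := hd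
    refine ⟨i, ?_⟩
    rw [hi, sub_self, norm_zero]
    exact mul_nonneg (mul_nonneg (specNorm_nonneg X) (specNorm_nonneg X⁻¹)) (specNorm_nonneg H)
  push_neg at hd
  have hdne : ∀ i, d i - lam' ≠ 0 := fun i => sub_ne_zero_of_ne fun h => hd i h.symm
  set E : Matrix (Fin n) (Fin n) ℂ := Matrix.diagonal (fun i => d i - lam') with hE
  have hEunit : IsUnit E := by
    rw [Matrix.isUnit_iff_isUnit_det, hE, Matrix.det_diagonal, isUnit_iff_ne_zero]
    exact Finset.prod_ne_zero_iff.mpr fun i _ => hdne i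
  have hEinv : E⁻¹ = Matrix.diagonal (fun i => (d i - lam')⁻¹) := by
    apply Matrix.inv_eq_right_inv
    rw [hE, Matrix.diagonal_mul_diagonal]
    convert Matrix.diagonal_one using 2
    exact funext fun i => mul_inv_cancel₀ (hdne i)
  set M : Matrix (Fin n) (Fin n) ℂ := E⁻¹ * (X⁻¹ * H * X) with hM
  -- key identity
  have hXinv : X * X⁻¹ = 1 := Matrix.mul_nonsing_inv X (hX.map (Matrix.detMonoidHom (n := Fin n)))
  have hEE : E * E⁻¹ = 1 := Matrix.mul_nonsing_inv E (hEunit.map (Matrix.detMonoidHom (n := Fin n)))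
  have key : A + H - algebraMap ℂ (Matrix (Fin n) (Fin n) ℂ) lam' =
      X * (E * (1 + M)) * X⁻¹ := by
    have halg : algebraMap ℂ (Matrix (Fin n) (Fin n) ℂ) lam' =
        X * Matrix.diagonal (fun _ => lam') * X⁻¹ := by
      rw [show Matrix.diagonal (fun _ : Fin n => lam') =
          algebraMap ℂ (Matrix (Fin n) (Fin n) ℂ) lam' by
        rw [Matrix.algebraMap_eq_diagonal]; rfl]
      rw [Algebra.algebraMap_eq_smul_one, Matrix.mul_smul, mul_one, Matrix.smul_mul, hXinv]
    calc A + H - algebraMap ℂ (Matrix (Fin n) (Fin n) ℂ) lam'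
        = X * E * X⁻¹ + H := by
          rw [hA, halg, hE,
            show Matrix.diagonal (fun i => d i - lam') =
              Matrix.diagonal d - Matrix.diagonal (fun _ => lam') from
              (Matrix.diagonal_sub d fun _ => lam').symm]
          noncomm_ring
      _ = X * (E * (1 + M)) * X⁻¹ := by
          have hEM : E * (1 + M) = E + X⁻¹ * H * X := by
            rw [hM, mul_add, mul_one, ← mul_assoc, hEE, one_mul]
          have hH : X * (X⁻¹ * H * X) * X⁻¹ = H := by
            calc X * (X⁻¹ * H * X) * X⁻¹ = (X * X⁻¹) * H * (X * X⁻¹) := by noncomm_ring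
              _ = H := by rw [hXinv, one_mul, mul_one]
          rw [hEM, mul_add, add_mul, hH]
  -- 1 + M is not a unit
  have hnotunit : ¬ IsUnit (1 + M) := by
    intro hu
    rw [spectrum.mem_iff] at hlam'
    apply hlam'
    have : IsUnit (A + H - algebraMap ℂ (Matrix (Fin n) (Fin n) ℂ) lam') := by
      rw [key]
      exact (hX.mul (hEunit.mul hu)).mul (Matrix.isUnit_nonsing_inv_iff.mpr hX)
    simpa [neg_sub] using this.neg
  -- so -1 is in the spectrum of M
  have hmem : (-1 : ℂ) ∈ spectrum ℂ M := by
    rw [spectrum.mem_iff]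
    intro hu
    apply hnotunit
    have : algebraMap ℂ (Matrix (Fin n) (Fin n) ℂ) (-1) - M = -(1 + M) := by
      rw [map_neg, map_one, neg_add, sub_eq_add_neg]
    rw [this] at hu
    simpa using hu.neg
  haveI : NormOneClass (Matrix (Fin n) (Fin n) ℂ) :=
    ⟨by rw [Matrix.cstar_norm_def, map_one]; exact norm_one⟩
  have hbound : (1 : ℝ) ≤ ‖M‖ := by
    simpa using spectrum.norm_le_norm_of_mem hmem
  -- pick the minimizing eigenvalue
  obtain ⟨i₀, -, hmin⟩ := Finset.exists_min_image Finset.univ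
    (fun i => ‖lam' - d i‖) ⟨Classical.arbitrary _, Finset.mem_univ _⟩
  refine ⟨i₀, ?_⟩
  set c : ℝ := ‖lam' - d i₀‖ with hc
  have hcpos : 0 < c := by
    rw [hc]
    exact norm_pos_iff.mpr (sub_ne_zero_of_ne (hd i₀))
  have hEinvnorm : ‖E⁻¹‖ ≤ c⁻¹ := by
    rw [hEinv]
    apply l2_opNorm_diagonal_le _ _ (inv_nonneg.mpr hcpos.le)
    intro i
    rw [norm_inv]
    apply inv_anti₀ hcpos
    rw [norm_sub_rev]
    exact hmin i (Finset.mem_univ i)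
  have hMnorm : ‖M‖ ≤ c⁻¹ * (specNorm X * specNorm X⁻¹ * specNorm H) := by
    calc ‖M‖ ≤ ‖E⁻¹‖ * ‖X⁻¹ * H * X‖ := norm_mul_le _ _
      _ ≤ ‖E⁻¹‖ * (‖X⁻¹ * H‖ * ‖X‖) := by
          exact mul_le_mul_of_nonneg_left (norm_mul_le _ _) (norm_nonneg _)
      _ ≤ ‖E⁻¹‖ * (‖X⁻¹‖ * ‖H‖ * ‖X‖) := by
          refine mul_le_mul_of_nonneg_left ?_ (norm_nonneg _)
          exact mul_le_mul_of_nonneg_right (norm_mul_le _ _) (norm_nonneg _)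
      _ ≤ c⁻¹ * (‖X⁻¹‖ * ‖H‖ * ‖X‖) := by
          exact mul_le_mul_of_nonneg_right hEinvnorm
            (mul_nonneg (mul_nonneg (norm_nonneg _) (norm_nonneg _)) (norm_nonneg _))
      _ = c⁻¹ * (specNorm X * specNorm X⁻¹ * specNorm H) := by
          rw [specNorm_eq_l2, specNorm_eq_l2, specNorm_eq_l2]; ring
  have h1 : (1:ℝ) ≤ c⁻¹ * (specNorm X * specNorm X⁻¹ * specNorm H) := le_trans hbound hMnorm
  have := mul_le_mul_of_nonneg_left h1 hcpos.le
  rw [mul_one, ← mul_assoc, mul_inv_cancel₀ hcpos.ne', one_mul] at this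
  exact this
end

section
/- Let V ∈ ℂ^{n×n} and W ∈ ℂ^{m×n} be σ-conformably ordered (columns come in conjugate pairs for indices ≤ 2σ and are real afterwards), with V invertible, and let V_R, W_R be their realifications. Then V_R is a real invertible matrix, W_R is real, and the matrix F = W_R V_R^{-1} ∈ ℝ^{m×n} satisfies F V = W over ℂ. -/
noncomputable def Umat (n σ : ℕ) : Matrix (Fin n) (Fin n) ℂ :=
  fun k i =>
    if (i : ℕ) < 2 * σ then
      if (i : ℕ) % 2 = 0 then
        (if k = i then 1/2 else if (k : ℕ) = (i : ℕ) + 1 then 1/2 else 0)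
      else
        (if (k : ℕ) + 1 = (i : ℕ) then 1/(2*Complex.I)
         else if k = i then -(1/(2*Complex.I)) else 0)
    else (if k = i then 1 else 0)

noncomputable def UmatInv (n σ : ℕ) : Matrix (Fin n) (Fin n) ℂ :=
  fun k i =>
    if (i : ℕ) < 2 * σ then
      if (i : ℕ) % 2 = 0 then
        (if k = i then 1 else if (k : ℕ) = (i : ℕ) + 1 then Complex.I else 0)
      else
        (if (k : ℕ) + 1 = (i : ℕ) then 1 else if k = i then -Complex.I else 0)
    else (if k = i then 1 else 0)

lemma sum_two_aux {n : ℕ} (f : Fin n → ℂ) (a b : Fin n) (hab : a ≠ b) (c1 c2 : ℂ) :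
    ∑ k, f k * (if k = a then c1 else if k = b then c2 else 0) = f a * c1 + f b * c2 := by
  rw [Finset.sum_congr rfl
      (g := fun k => (if k = a then f a * c1 else 0) + (if k = b then f b * c2 else 0)) ?_,
    Finset.sum_add_distrib]
  · simp
  · intro k _
    by_cases h1 : k = a <;> by_cases h2 : k = b <;> simp_all

lemma realify_eq_mul {n m σ : ℕ} (h2σ : 2 * σ ≤ n)
    (A B : Matrix (Fin m) (Fin n) ℂ)
    (hp : ∀ i : Fin n, (i : ℕ) < 2 * σ → (i : ℕ) % 2 = 0 →
      ∃ hi : (i : ℕ) + 1 < n,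
        (∀ j, B j i = (A j i + A j ⟨(i : ℕ) + 1, hi⟩) / 2) ∧
        (∀ j, B j ⟨(i : ℕ) + 1, hi⟩ = (A j i - A j ⟨(i : ℕ) + 1, hi⟩) / (2 * Complex.I)))
    (hr : ∀ i : Fin n, 2 * σ ≤ (i : ℕ) → ∀ j, B j i = A j i) :
    B = A * Umat n σ ∧ A = B * UmatInv n σ := by
  have hIne : (2 * Complex.I) ≠ 0 := by
    simp [Complex.I_ne_zero]
  constructor
  · ext j i
    rw [Matrix.mul_apply]
    by_cases hlt : (i : ℕ) < 2 * σ
    · by_cases heven : (i : ℕ) % 2 = 0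
      · obtain ⟨hi, hB1, hB2⟩ := hp i hlt heven
        set i' : Fin n := ⟨(i : ℕ) + 1, hi⟩ with hi'def
        have hab : i ≠ i' := by
          intro h; have := congrArg Fin.val h; simp [hi'def] at this
        have hU : ∀ k : Fin n, Umat n σ k i
            = if k = i then (1/2 : ℂ) else if k = i' then 1/2 else 0 := by
          intro k
          simp only [Umat, if_pos hlt, if_pos heven, hi'def, Fin.ext_iff]
        simp_rw [hU]
        rw [sum_two_aux (A j) i i' hab, hB1 j]
        ring
      · -- odd column
        have h1le : 1 ≤ (i : ℕ) := by omega
        set i0 : Fin n := ⟨(i : ℕ) - 1, by omega⟩ with hi0def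
        have h0lt : (i0 : ℕ) < 2 * σ := by simp [hi0def]; omega
        have h0even : (i0 : ℕ) % 2 = 0 := by simp [hi0def]; omega
        obtain ⟨hi, hB1, hB2⟩ := hp i0 h0lt h0even
        have hii : (⟨(i0 : ℕ) + 1, hi⟩ : Fin n) = i := by
          apply Fin.ext; simp [hi0def]; omega
        have hab : i0 ≠ i := by
          intro h; have := congrArg Fin.val h; simp [hi0def] at this; omega
        have hU : ∀ k : Fin n, Umat n σ k i
            = if k = i0 then (1/(2*Complex.I) : ℂ)
              else if k = i then -(1/(2*Complex.I)) else 0 := by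
          intro k
          simp only [Umat, if_pos hlt, if_neg heven, hi0def, Fin.ext_iff]
          congr 1
          simp only [eq_iff_iff]
          omega
        simp_rw [hU]
        rw [sum_two_aux (A j) i0 i hab]
        have := hB2 j
        rw [hii] at this
        rw [this]
        ring
    · rw [hr i (by omega) j]
      have hU : ∀ k : Fin n, Umat n σ k i = if k = i then (1 : ℂ) else 0 := by
        intro k; simp only [Umat, if_neg hlt]
      simp_rw [hU]
      simp [mul_ite]
  · ext j i
    rw [Matrix.mul_apply]
    by_cases hlt : (i : ℕ) < 2 * σ
    · by_cases heven : (i : ℕ) % 2 = 0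
      · obtain ⟨hi, hB1, hB2⟩ := hp i hlt heven
        set i' : Fin n := ⟨(i : ℕ) + 1, hi⟩ with hi'def
        have hab : i ≠ i' := by
          intro h; have := congrArg Fin.val h; simp [hi'def] at this
        have hU : ∀ k : Fin n, UmatInv n σ k i
            = if k = i then (1 : ℂ) else if k = i' then Complex.I else 0 := by
          intro k
          simp only [UmatInv, if_pos hlt, if_pos heven, hi'def, Fin.ext_iff]
        simp_rw [hU]
        rw [sum_two_aux (B j) i i' hab, hB1 j, hB2 j]
        field_simp
        ring
      · have h1le : 1 ≤ (i : ℕ) := by omega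
        set i0 : Fin n := ⟨(i : ℕ) - 1, by omega⟩ with hi0def
        have h0lt : (i0 : ℕ) < 2 * σ := by simp [hi0def]; omega
        have h0even : (i0 : ℕ) % 2 = 0 := by simp [hi0def]; omega
        obtain ⟨hi, hB1, hB2⟩ := hp i0 h0lt h0even
        have hii : (⟨(i0 : ℕ) + 1, hi⟩ : Fin n) = i := by
          apply Fin.ext; simp [hi0def]; omega
        have hab : i0 ≠ i := by
          intro h; have := congrArg Fin.val h; simp [hi0def] at this; omega
        have hU : ∀ k : Fin n, UmatInv n σ k i
            = if k = i0 then (1 : ℂ) else if k = i then -Complex.I else 0 := by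
          intro k
          simp only [UmatInv, if_pos hlt, if_neg heven, hi0def, Fin.ext_iff]
          congr 1
          simp only [eq_iff_iff]
          omega
        simp_rw [hU]
        rw [sum_two_aux (B j) i0 i hab]
        have h2 := hB2 j
        rw [hii] at h2
        rw [hB1 j, h2, hii]
        field_simp
        ring
    · rw [← hr i (by omega) j]
      have hU : ∀ k : Fin n, UmatInv n σ k i = if k = i then (1 : ℂ) else 0 := by
        intro k; simp only [UmatInv, if_neg hlt]
      simp_rw [hU]
      simp [mul_ite]

lemma realify_im_zero {n m σ : ℕ}
    (A B : Matrix (Fin m) (Fin n) ℂ)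
    (hp : ∀ i : Fin n, (i : ℕ) < 2 * σ → (i : ℕ) % 2 = 0 →
      ∃ hi : (i : ℕ) + 1 < n,
        (∀ j, A j ⟨(i : ℕ) + 1, hi⟩ = starRingEnd ℂ (A j i)) ∧
        (∀ j, B j i = (A j i + A j ⟨(i : ℕ) + 1, hi⟩) / 2) ∧
        (∀ j, B j ⟨(i : ℕ) + 1, hi⟩ = (A j i - A j ⟨(i : ℕ) + 1, hi⟩) / (2 * Complex.I)))
    (hr : ∀ i : Fin n, 2 * σ ≤ (i : ℕ) → ∀ j, B j i = A j i ∧ (A j i).im = 0) :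
    ∀ j i, (B j i).im = 0 := by
  intro j i
  by_cases hlt : (i : ℕ) < 2 * σ
  · by_cases heven : (i : ℕ) % 2 = 0
    · obtain ⟨hi, hc, hB1, hB2⟩ := hp i hlt heven
      rw [hB1 j, hc j, Complex.add_conj]
      simp
    · have h1le : 1 ≤ (i : ℕ) := by omega
      set i0 : Fin n := ⟨(i : ℕ) - 1, by omega⟩ with hi0def
      have h0lt : (i0 : ℕ) < 2 * σ := by simp [hi0def]; omega
      have h0even : (i0 : ℕ) % 2 = 0 := by simp [hi0def]; omega
      obtain ⟨hi, hc, hB1, hB2⟩ := hp i0 h0lt h0even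
      have hii : (⟨(i0 : ℕ) + 1, hi⟩ : Fin n) = i := by
        apply Fin.ext; simp [hi0def]; omega
      have h2 := hB2 j
      have hcj := hc j
      rw [hii] at h2 hcj
      rw [h2, hcj, Complex.sub_conj]
      have hkey : ((2 * (A j i0).im : ℝ) : ℂ) * Complex.I / (2 * Complex.I)
          = ((A j i0).im : ℂ) := by
        have hIne : (2 * Complex.I) ≠ 0 := by simp [Complex.I_ne_zero]
        field_simp
        push_cast; ring
      rw [hkey]
      simp
  · rw [(hr i (by omega) j).1]
    exact (hr i (by omega) j).2

/-- If `V ∈ ℂ^{n×n}` (invertible) and `W ∈ ℂ^{m×n}` are σ-conformably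
ordered (columns in conjugate pairs for indices < 2σ, 0-based pairs `(2k, 2k+1)`, real
afterwards) and `VR`, `WR` are their realifications, then `VR` and `WR` are real,
the real matrix `VR` is invertible, and the real matrix `F = WR VR⁻¹` satisfies
`F V = W` over ℂ. -/
theorem realified_feedback_solves_complex_equation (n m σ : ℕ) (h2σ : 2 * σ ≤ n)
    (V VR : Matrix (Fin n) (Fin n) ℂ) (W WR : Matrix (Fin m) (Fin n) ℂ)
    (hV : IsUnit V)
    (hpair : ∀ i : Fin n, (i : ℕ) < 2 * σ → (i : ℕ) % 2 = 0 →
      ∃ hi : (i : ℕ) + 1 < n,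
        (∀ j, V j ⟨(i : ℕ) + 1, hi⟩ = starRingEnd ℂ (V j i)) ∧
        (∀ j, W j ⟨(i : ℕ) + 1, hi⟩ = starRingEnd ℂ (W j i)) ∧
        (∀ j, VR j i = (V j i + V j ⟨(i : ℕ) + 1, hi⟩) / 2) ∧
        (∀ j, VR j ⟨(i : ℕ) + 1, hi⟩ = (V j i - V j ⟨(i : ℕ) + 1, hi⟩) / (2 * Complex.I)) ∧
        (∀ j, WR j i = (W j i + W j ⟨(i : ℕ) + 1, hi⟩) / 2) ∧
        (∀ j, WR j ⟨(i : ℕ) + 1, hi⟩ = (W j i - W j ⟨(i : ℕ) + 1, hi⟩) / (2 * Complex.I)))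
    (hrealcol : ∀ i : Fin n, 2 * σ ≤ (i : ℕ) →
      (∀ j, VR j i = V j i ∧ (V j i).im = 0) ∧
      (∀ j, WR j i = W j i ∧ (W j i).im = 0)) :
    (∀ j i, (VR j i).im = 0) ∧ (∀ j i, (WR j i).im = 0) ∧
    IsUnit (VR.map Complex.re) ∧
    (((WR.map Complex.re) * (VR.map Complex.re)⁻¹).map (Complex.ofReal)) * V = W := by
  -- factorizations through Umat
  obtain ⟨hVU, hVUinv⟩ := realify_eq_mul h2σ V VR
    (fun i hlt heven => by
      obtain ⟨hi, _, _, h1, h2, _, _⟩ := hpair i hlt heven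
      exact ⟨hi, h1, h2⟩)
    (fun i h j => ((hrealcol i h).1 j).1)
  obtain ⟨hWU, hWUinv⟩ := realify_eq_mul h2σ W WR
    (fun i hlt heven => by
      obtain ⟨hi, _, _, _, _, h1, h2⟩ := hpair i hlt heven
      exact ⟨hi, h1, h2⟩)
    (fun i h j => ((hrealcol i h).2 j).1)
  -- im zero
  have hVRim : ∀ j i, (VR j i).im = 0 :=
    realify_im_zero V VR
      (fun i hlt heven => by
        obtain ⟨hi, hc, _, h1, h2, _, _⟩ := hpair i hlt heven
        exact ⟨hi, hc, h1, h2⟩)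
      (fun i h j => (hrealcol i h).1 j)
  have hWRim : ∀ j i, (WR j i).im = 0 :=
    realify_im_zero W WR
      (fun i hlt heven => by
        obtain ⟨hi, _, hc, _, _, h1, h2⟩ := hpair i hlt heven
        exact ⟨hi, hc, h1, h2⟩)
      (fun i h j => (hrealcol i h).2 j)
  -- U is a unit
  have hUU : Umat n σ * UmatInv n σ = 1 := by
    apply hV.mul_left_cancel
    rw [← Matrix.mul_assoc, ← hVU, ← hVUinv, Matrix.mul_one]
  have hUU' : UmatInv n σ * Umat n σ = 1 := mul_eq_one_comm.mp hUU
  have hUunit : IsUnit (Umat n σ) := ⟨⟨Umat n σ, UmatInv n σ, hUU, hUU'⟩, rfl⟩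
  have hVRunit : IsUnit VR := hVU ▸ hV.mul hUunit
  have hVRdet : IsUnit VR.det := (Matrix.isUnit_iff_isUnit_det VR).mp hVRunit
  -- VR = (VR.map re).map ofReal, similarly WR
  have hVRmap : (VR.map Complex.re).map (Complex.ofReal) = VR := by
    ext j i
    simp only [Matrix.map_apply]
    exact Complex.ext (by simp) (by simp [hVRim j i])
  have hWRmap : (WR.map Complex.re).map (Complex.ofReal) = WR := by
    ext j i
    simp only [Matrix.map_apply]
    exact Complex.ext (by simp) (by simp [hWRim j i])
  have hVRreUnit : IsUnit (VR.map Complex.re) := by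
    rw [Matrix.isUnit_iff_isUnit_det]
    have hdet : (Complex.ofRealHom : ℝ →+* ℂ) (VR.map Complex.re).det
        = VR.det := by
      rw [RingHom.map_det]
      exact congrArg Matrix.det hVRmap
    rw [isUnit_iff_ne_zero]
    intro h0
    rw [h0] at hdet
    simp at hdet
    exact (isUnit_iff_ne_zero.mp hVRdet) hdet.symm
  refine ⟨hVRim, hWRim, hVRreUnit, ?_⟩
  -- inverse maps correctly
  have hinvmap : ((VR.map Complex.re)⁻¹).map (Complex.ofReal) = VR⁻¹ := by
    symm
    apply Matrix.inv_eq_left_inv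
    have : ((VR.map Complex.re)⁻¹ * (VR.map Complex.re)).map
        (Complex.ofRealHom : ℝ →+* ℂ) = 1 := by
      rw [Matrix.nonsing_inv_mul _ ((Matrix.isUnit_iff_isUnit_det _).mp hVRreUnit)]
      exact Matrix.map_one _ (map_zero _) (map_one _)
    rw [Matrix.map_mul] at this
    convert this using 2
    · rfl
    · exact hVRmap.symm
  have hmapmul : ((WR.map Complex.re) * (VR.map Complex.re)⁻¹).map (Complex.ofReal)
      = WR * VR⁻¹ := by
    have h2 : (WR.map Complex.re * (VR.map Complex.re)⁻¹).map Complex.ofReal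
        = (WR.map Complex.re).map Complex.ofReal
          * ((VR.map Complex.re)⁻¹).map Complex.ofReal :=
      Matrix.map_mul (L := WR.map Complex.re) (M := (VR.map Complex.re)⁻¹)
        (f := (Complex.ofRealHom : ℝ →+* ℂ))
    rw [h2, hWRmap, hinvmap]
  rw [hmapmul, Matrix.mul_assoc]
  have hVeq : VR⁻¹ * V = UmatInv n σ := by
    rw [hVUinv, ← Matrix.mul_assoc, Matrix.nonsing_inv_mul _ hVRdet, Matrix.one_mul]
  rw [hVeq, ← hWUinv]
end
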